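/- With B(t) = ½ Σ_{i=1}^N |t − v_i| − ½ Σ_{i=1}^{N−1} |t − u_i| and L(t) the total length of the '−' intervals lying to the left of t (where the intervals (u_i, v_{i+1}) and (u_0, v_1) carry sign −), one has L(t) + B(t) = t/2 − u_0 for all t in the interval (u_0, u_N). -/

import Mathlib

open Finset

/-- `B(t) = ½ Σ_{i=1}^N |t − v_i| − ½ Σ_{i=1}^{N−1} |t − u_i|`. -/
noncomputable def Bfun (N : ℕ) (u v : ℕ → ℝ) (t : ℝ) : ℝ :=
  (∑ i ∈ Finset.Icc 1 N, |t - v i|) / 2 - (∑ i ∈ Finset.Icc 1 (N - 1), |t - u i|) / 2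

private lemma icc_eq_ioc (n : ℕ) : Finset.Icc 1 n = Finset.Ioc 0 n := by
  rw [← Finset.Icc_add_one_left_eq_Ioc]
  rfl

private lemma range_shift (f : ℕ → ℝ) (n : ℕ) :
    ∑ j ∈ Finset.range n, f (j + 1) = ∑ j ∈ Finset.Ioc 0 n, f j := by
  rw [← Finset.Icc_add_one_left_eq_Ioc, ← Finset.Ico_add_one_right_eq_Icc, Finset.sum_Ico_eq_sum_range]
  simp [add_comm]

private lemma abs_split (t : ℝ) (w : ℕ → ℝ) (k m : ℕ) (hk : k ≤ m)
    (h1 : ∀ j ∈ Finset.Ioc 0 k, w j ≤ t) (h2 : ∀ j ∈ Finset.Ioc k m, t ≤ w j) :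
    ∑ j ∈ Finset.Ioc 0 m, |t - w j|
      = ((k : ℝ) * t - ∑ j ∈ Finset.Ioc 0 k, w j)
        + ((∑ j ∈ Finset.Ioc k m, w j) - ((m : ℝ) - (k : ℝ)) * t) := by
  rw [← Finset.sum_Ioc_consecutive _ (Nat.zero_le k) hk]
  have e1 : ∑ j ∈ Finset.Ioc 0 k, |t - w j|
      = (k : ℝ) * t - ∑ j ∈ Finset.Ioc 0 k, w j := by
    rw [Finset.sum_congr rfl (fun j hj => abs_of_nonneg (by linarith [h1 j hj]))]
    rw [Finset.sum_sub_distrib, Finset.sum_const, Nat.card_Ioc]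
    simp [nsmul_eq_mul]
  have e2 : ∑ j ∈ Finset.Ioc k m, |t - w j|
      = (∑ j ∈ Finset.Ioc k m, w j) - ((m : ℝ) - (k : ℝ)) * t := by
    rw [Finset.sum_congr rfl (fun j hj => abs_of_nonpos (by linarith [h2 j hj]))]
    simp only [neg_sub]
    rw [Finset.sum_sub_distrib, Finset.sum_const, Nat.card_Ioc]
    have hc : ((m - k : ℕ) : ℝ) = (m : ℝ) - (k : ℝ) := by
      push_cast [hk]; ring
    rw [nsmul_eq_mul, hc]
  rw [e1, e2]

/-- With `L(t)` the total length of the '−' intervals to the left of `t`,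
one has `L(t) + B(t) = t/2 − u₀` throughout `(u₀, u_N)`. -/
theorem L_add_B (N : ℕ) (hN : 1 ≤ N) (u v : ℕ → ℝ)
    (horder : ∀ i < N, u i < v (i + 1) ∧ v (i + 1) < u (i + 1))
    (hnorm : ∑ i ∈ Finset.Icc 1 N, v i = ∑ i ∈ Finset.Icc 1 (N - 1), u i) :
    ∀ t : ℝ, u 0 < t → t < u N → ∀ i : ℕ,
      ((1 ≤ i → i ≤ N → v i < t → t < u i →
        (∑ j ∈ Finset.range i, (v (j + 1) - u j)) + Bfun N u v t = t / 2 - u 0) ∧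
       (i < N → u i < t → t < v (i + 1) →
        (∑ j ∈ Finset.range i, (v (j + 1) - u j)) + (t - u i) + Bfun N u v t
          = t / 2 - u 0)) := by
  obtain ⟨N', rfl⟩ : ∃ N', N = N' + 1 := ⟨N - 1, by omega⟩
  have uv : ∀ i < N' + 1, u i < v (i + 1) := fun i h => (horder i h).1
  have vu : ∀ i < N' + 1, v (i + 1) < u (i + 1) := fun i h => (horder i h).2
  have ustep : ∀ i < N' + 1, u i < u (i + 1) := fun i h => lt_trans (uv i h) (vu i h)
  have umono : ∀ k ≤ N' + 1, ∀ j ≤ k, u j ≤ u k := by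
    intro k
    induction k with
    | zero =>
      intro _ j hj
      have h : j = 0 := by omega
      subst h
      exact le_refl _
    | succ k ih =>
      intro hk j hj
      rcases Nat.lt_or_ge j (k + 1) with h | h
      · exact le_trans (ih (by omega) j (by omega)) (le_of_lt (ustep k (by omega)))
      · have h : j = k + 1 := by omega
        subst h
        exact le_refl _
  have vmono : ∀ j k, 1 ≤ j → j ≤ k → k ≤ N' + 1 → v j ≤ v k := by
    intro j k h1 hjk hkN
    rcases eq_or_lt_of_le hjk with rfl | h
    · exact le_refl _
    · have h1' : v j < u j := by
        have := vu (j - 1) (by omega)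
        have hj : j - 1 + 1 = j := by omega
        rwa [hj] at this
      have h2' : u j ≤ u (k - 1) := umono (k - 1) (by omega) j (by omega)
      have h3' : u (k - 1) < v k := by
        have := uv (k - 1) (by omega)
        have hk' : k - 1 + 1 = k := by omega
        rwa [hk'] at this
      linarith
  have urange : ∀ i : ℕ,
      ∑ j ∈ Finset.range i, u j = u 0 + (∑ j ∈ Finset.Ioc 0 i, u j) - u i := by
    intro i
    have h1 := Finset.sum_range_succ u i
    have h2 := Finset.sum_range_succ' u i
    rw [range_shift u i] at h2
    linarith
  have Lsum : ∀ i : ℕ,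
      ∑ j ∈ Finset.range i, (v (j + 1) - u j)
        = (∑ j ∈ Finset.Ioc 0 i, v j) - ∑ j ∈ Finset.range i, u j := by
    intro i
    rw [Finset.sum_sub_distrib, range_shift]
  simp only [Nat.add_sub_cancel, icc_eq_ioc] at hnorm
  intro t ht0 htN i
  constructor
  · intro h1i hiN hvt htu
    obtain ⟨i', rfl⟩ : ∃ i', i = i' + 1 := ⟨i - 1, by omega⟩
    have split_v := abs_split t v (i' + 1) (N' + 1) (by omega)
      (by
        intro j hj
        simp only [Finset.mem_Ioc] at hj
        have := vmono j (i' + 1) (by omega) (by omega) (by omega)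
        linarith)
      (by
        intro j hj
        simp only [Finset.mem_Ioc] at hj
        have h1 := uv (i' + 1) (by omega)
        have h2 := vmono (i' + 2) j (by omega) (by omega) (by omega)
        linarith)
    have split_u := abs_split t u i' N' (by omega)
      (by
        intro j hj
        simp only [Finset.mem_Ioc] at hj
        have h1 := umono i' (by omega) j (by omega)
        have h2 := uv i' (by omega)
        linarith)
      (by
        intro j hj
        simp only [Finset.mem_Ioc] at hj
        have h1 := umono j (by omega) (i' + 1) (by omega)
        linarith)
    have hv_tot := Finset.sum_Ioc_consecutive v (Nat.zero_le (i' + 1))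
      (show i' + 1 ≤ N' + 1 by omega)
    have hu_tot := Finset.sum_Ioc_consecutive u (Nat.zero_le i')
      (show i' ≤ N' by omega)
    have hIoc : ∑ j ∈ Finset.Ioc 0 (i' + 1), u j
        = (∑ j ∈ Finset.Ioc 0 i', u j) + u (i' + 1) :=
      Finset.sum_Ioc_succ_top (Nat.zero_le i') u
    have hR := urange (i' + 1)
    rw [Lsum]
    simp only [Bfun, Nat.add_sub_cancel, icc_eq_ioc]
    rw [split_v, split_u, hR]
    push_cast
    linarith
  · intro hiN hut htv
    have split_v := abs_split t v i (N' + 1) (by omega)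
      (by
        intro j hj
        simp only [Finset.mem_Ioc] at hj
        have h1 := vmono j i (by omega) (by omega) (by omega)
        have h2 : v i < u i := by
          have := vu (i - 1) (by omega)
          have hi : i - 1 + 1 = i := by omega
          rwa [hi] at this
        linarith)
      (by
        intro j hj
        simp only [Finset.mem_Ioc] at hj
        have := vmono (i + 1) j (by omega) (by omega) (by omega)
        linarith)
    have split_u := abs_split t u i N' (by omega)
      (by
        intro j hj
        simp only [Finset.mem_Ioc] at hj
        have := umono i (by omega) j (by omega)
        linarith)
      (by
        intro j hj
        simp only [Finset.mem_Ioc] at hj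
        have h1 := vu i (by omega)
        have h2 := umono j (by omega) (i + 1) (by omega)
        linarith)
    have hv_tot := Finset.sum_Ioc_consecutive v (Nat.zero_le i)
      (show i ≤ N' + 1 by omega)
    have hu_tot := Finset.sum_Ioc_consecutive u (Nat.zero_le i)
      (show i ≤ N' by omega)
    have hR := urange i
    rw [Lsum]
    simp only [Bfun, Nat.add_sub_cancel, icc_eq_ioc]
    rw [split_v, split_u, hR]
    push_cast
    linarith
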